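/- Let A be an n×n row-stochastic real matrix with strictly positive diagonal entries, let ε₁,…,εₙ satisfy 0 < εᵢ < aᵢᵢ for every i with 𝓔 = diag(ε₁,…,εₙ), let k ≥ 1 and σ̄ ∈ ℝ^k, and let (X_t) in ℝ^{kn} satisfy X_{t+1} = (A ⊗ I_k) X_t + (𝓔 ⊗ I_k)(𝟏ₙ ⊗ σ̄ − X_t) from an arbitrary X₁. Then ‖(A − 𝓔) ⊗ I_k‖_∞ < 1 and for every t ≥ 1, ‖X_t − (𝟏ₙ ⊗ σ̄)‖_∞ ≤ ‖(A − 𝓔) ⊗ I_k‖_∞^{t−1} · ‖X₁ − (𝟏ₙ ⊗ σ̄)‖_∞; in particular consensus to 𝟏ₙ ⊗ σ̄ is reached exponentially fast. -/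

import Mathlib

open Kronecker

/-- The vector infinity norm: maximum absolute value of the entries. -/
noncomputable def vecInfNorm {ι : Type*} [Fintype ι] (v : ι → ℝ) : ℝ :=
  ⨆ i, |v i|

/-- The matrix operator norm induced by the vector infinity norm,
which equals the maximum absolute row sum. -/
noncomputable def matInfNorm {ι : Type*} [Fintype ι] (M : Matrix ι ι ℝ) : ℝ :=
  ⨆ i, ∑ j, |M i j|

lemma vecInfNorm_nonneg {ι : Type*} [Fintype ι] (v : ι → ℝ) : 0 ≤ vecInfNorm v :=
  Real.iSup_nonneg (fun _ => abs_nonneg _)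

lemma abs_le_vecInfNorm {ι : Type*} [Fintype ι] (v : ι → ℝ) (i : ι) :
    |v i| ≤ vecInfNorm v := by
  exact le_ciSup (Finite.bddAbove_range (fun j => |v j|)) i

lemma rowsum_le_matInfNorm {ι : Type*} [Fintype ι] (M : Matrix ι ι ℝ) (i : ι) :
    ∑ j, |M i j| ≤ matInfNorm M := by
  exact le_ciSup (Finite.bddAbove_range (fun r => ∑ j, |M r j|)) i

lemma matInfNorm_nonneg {ι : Type*} [Fintype ι] (M : Matrix ι ι ℝ) : 0 ≤ matInfNorm M :=
  Real.iSup_nonneg (fun _ => Finset.sum_nonneg fun _ _ => abs_nonneg _)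

lemma mulVec_bound {ι : Type*} [Fintype ι] (M : Matrix ι ι ℝ) (v : ι → ℝ) :
    vecInfNorm (M.mulVec v) ≤ matInfNorm M * vecInfNorm v := by
  apply Real.iSup_le _ (mul_nonneg (matInfNorm_nonneg M) (vecInfNorm_nonneg v))
  intro i
  calc |(M.mulVec v) i| ≤ ∑ j, |M i j * v j| := by
        simpa [Matrix.mulVec, dotProduct] using Finset.abs_sum_le_sum_abs (fun j => M i j * v j) Finset.univ
    _ ≤ ∑ j, |M i j| * vecInfNorm v := by
        refine Finset.sum_le_sum fun j _ => ?_
        rw [abs_mul]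
        exact mul_le_mul_of_nonneg_left (abs_le_vecInfNorm v j) (abs_nonneg _)
    _ = (∑ j, |M i j|) * vecInfNorm v := (Finset.sum_mul _ _ _).symm
    _ ≤ matInfNorm M * vecInfNorm v :=
        mul_le_mul_of_nonneg_right (rowsum_le_matInfNorm M i) (vecInfNorm_nonneg v)

lemma kron_rowsum {n k : ℕ} (B : Matrix (Fin n) (Fin n) ℝ) (ip : Fin n × Fin k) :
    ∑ jq : Fin n × Fin k, |(B ⊗ₖ (1 : Matrix (Fin k) (Fin k) ℝ)) ip jq| = ∑ j, |B ip.1 j| := by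
  rw [Fintype.sum_prod_type]
  simp [Matrix.kroneckerMap_apply, Matrix.one_apply, abs_mul, apply_ite (abs : ℝ → ℝ),
    mul_ite, mul_one, mul_zero, Finset.sum_ite_eq]

lemma consensus_fixed {n k : ℕ} (A : Matrix (Fin n) (Fin n) ℝ)
    (hA_row : ∀ i, ∑ j, A i j = 1) (σ : Fin k → ℝ) :
    (A ⊗ₖ (1 : Matrix (Fin k) (Fin k) ℝ)).mulVec (fun p => σ p.2) = fun p => σ p.2 := by
  funext p
  obtain ⟨i, q⟩ := p
  simp only [Matrix.mulVec, dotProduct, Fintype.sum_prod_type,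
    Matrix.kroneckerMap_apply, Matrix.one_apply, mul_ite, mul_one, mul_zero, ite_mul, zero_mul]
  simp only [Finset.sum_ite_eq, Finset.mem_univ, if_true]
  rw [← Finset.sum_mul, hA_row, one_mul]

/-- **Corollary 3: exponential consensus with feedback, vectored dynamics.**
Under the hypotheses of Theorem 3, `‖(A − 𝓔) ⊗ I_k‖_∞ < 1` and
`‖X_t − 𝟏ₙ ⊗ σ̄‖_∞ ≤ ‖(A − 𝓔) ⊗ I_k‖_∞^{t−1} · ‖X₁ − 𝟏ₙ ⊗ σ̄‖_∞`
(indices shifted so that the initial condition is `X 0`). -/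
theorem exponential_consensus_with_feedback_vectored
    {n k : ℕ} (hk : 1 ≤ k)
    (A : Matrix (Fin n) (Fin n) ℝ)
    (hA_nonneg : ∀ i j, 0 ≤ A i j)
    (hA_row : ∀ i, ∑ j, A i j = 1)
    (hA_diag : ∀ i, 0 < A i i)
    (ε : Fin n → ℝ) (hε_pos : ∀ i, 0 < ε i) (hε_lt : ∀ i, ε i < A i i)
    (σ : Fin k → ℝ) (X : ℕ → Fin n × Fin k → ℝ)
    (hX : ∀ t, X (t + 1) =
      (A ⊗ₖ (1 : Matrix (Fin k) (Fin k) ℝ)).mulVec (X t) +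
        ((Matrix.diagonal ε) ⊗ₖ (1 : Matrix (Fin k) (Fin k) ℝ)).mulVec
          ((fun p => σ p.2) - X t)) :
    matInfNorm ((A - Matrix.diagonal ε) ⊗ₖ (1 : Matrix (Fin k) (Fin k) ℝ)) < 1 ∧
      ∀ t : ℕ, vecInfNorm (X t - (fun p => σ p.2)) ≤
        (matInfNorm ((A - Matrix.diagonal ε) ⊗ₖ (1 : Matrix (Fin k) (Fin k) ℝ))) ^ t *
          vecInfNorm (X 0 - (fun p => σ p.2)) := by
  set B := A - Matrix.diagonal ε with hB
  set M := B ⊗ₖ (1 : Matrix (Fin k) (Fin k) ℝ) with hM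
  -- row sums of B
  have hrow : ∀ i : Fin n, ∑ j, |B i j| = 1 - ε i := by
    intro i
    have habs : ∀ j, |B i j| = A i j - Matrix.diagonal ε i j := by
      intro j
      apply abs_of_nonneg
      by_cases h : i = j
      · subst h
        rw [hB, Matrix.sub_apply, Matrix.diagonal_apply_eq]
        linarith [hε_lt i]
      · rw [hB, Matrix.sub_apply, Matrix.diagonal_apply_ne _ h, sub_zero]
        exact hA_nonneg i j
    simp only [habs]
    rw [Finset.sum_sub_distrib, hA_row]
    congr 1
    simp [Matrix.diagonal]
  -- matInfNorm < 1
  have hlt : matInfNorm M < 1 := by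
    rcases Nat.eq_zero_or_pos n with hn | hn
    · subst hn
      have : IsEmpty (Fin 0 × Fin k) := by infer_instance
      rw [matInfNorm, Real.iSup_of_isEmpty]
      norm_num
    · have hnonempty : Nonempty (Fin n) := Fin.pos_iff_nonempty.mp hn
      have hne : (Finset.univ : Finset (Fin n)).Nonempty := Finset.univ_nonempty
      set m := Finset.univ.inf' hne ε with hm
      have hm_pos : 0 < m := by
        rw [hm, Finset.lt_inf'_iff]
        exact fun i _ => hε_pos i
      have hm_le : ∀ i, m ≤ ε i := fun i => Finset.inf'_le _ (Finset.mem_univ i)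
      obtain ⟨i0⟩ := hnonempty
      have hm_le_one : m ≤ 1 := by
        have h1 : A i0 i0 ≤ ∑ j, A i0 j :=
          Finset.single_le_sum (fun j _ => hA_nonneg i0 j) (Finset.mem_univ i0)
        rw [hA_row] at h1
        linarith [hε_lt i0, hm_le i0]
      have hub : matInfNorm M ≤ 1 - m := by
        apply Real.iSup_le _ (by linarith)
        intro ip
        rw [kron_rowsum, hrow]
        linarith [hm_le ip.1]
      linarith
  refine ⟨hlt, ?_⟩
  -- recurrence on the error
  have hAfix := consensus_fixed A hA_row σ
  have hrec : ∀ t, X (t + 1) - (fun p => σ p.2) = M.mulVec (X t - fun p => σ p.2) := by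
    intro t
    have hsub : M = A ⊗ₖ (1 : Matrix (Fin k) (Fin k) ℝ) -
        (Matrix.diagonal ε) ⊗ₖ (1 : Matrix (Fin k) (Fin k) ℝ) := by
      rw [hM, hB]
      ext ⟨i, p⟩ ⟨j, q⟩
      simp [Matrix.kroneckerMap_apply, Matrix.sub_apply, sub_mul]
    rw [hsub, Matrix.sub_mulVec, Matrix.mulVec_sub, Matrix.mulVec_sub,
      hAfix, hX t, Matrix.mulVec_sub]
    abel
  intro t
  induction t with
  | zero => simp
  | succ t ih =>
    rw [hrec t]
    calc vecInfNorm (M.mulVec (X t - fun p => σ p.2))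
        ≤ matInfNorm M * vecInfNorm (X t - fun p => σ p.2) := mulVec_bound _ _
      _ ≤ matInfNorm M * (matInfNorm M ^ t * vecInfNorm (X 0 - fun p => σ p.2)) :=
          mul_le_mul_of_nonneg_left ih (matInfNorm_nonneg M)
      _ = matInfNorm M ^ (t + 1) * vecInfNorm (X 0 - fun p => σ p.2) := by ring
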